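/- Let H₁ ↪ H₀ be a compact Hilbert–Schmidt embedding of Hilbert spaces (singular values in ℓ²). Then for 0 ≤ θ₁ < θ₂ ≤ 1 the embedding of the interpolation space [H₀,H₁]_{θ₂} into [H₀,H₁]_{θ₁} belongs to the Schatten class of order 2/(θ₂−θ₁). -/

import Mathlib

open scoped InnerProductSpace

noncomputable section

variable {H : Type*} [NormedAddCommGroup H] [InnerProductSpace ℂ H] [CompleteSpace H]

/-- Membership in the spectrally defined interpolation space `[H₀, H₁]_θ`. -/
def interpMem (φ : HilbertBasis ℕ ℂ H) (s : ℕ → ℝ) (θ : ℝ) (u : H) : Prop :=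
  Summable fun n => s n ^ (2 * (1 - θ)) * ‖φ.repr u n‖ ^ 2

/-- The norm of the interpolation space `[H₀, H₁]_θ`. -/
def interpNorm (φ : HilbertBasis ℕ ℂ H) (s : ℕ → ℝ) (θ : ℝ) (u : H) : ℝ :=
  Real.sqrt (∑' n, s n ^ (2 * (1 - θ)) * ‖φ.repr u n‖ ^ 2)

/-- The inner product of the interpolation space `[H₀, H₁]_θ`. -/
def interpInner (φ : HilbertBasis ℕ ℂ H) (s : ℕ → ℝ) (θ : ℝ) (u v : H) : ℂ :=
  ∑' n, ((s n ^ (2 * (1 - θ)) : ℝ) : ℂ) *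
    (starRingEnd ℂ) (φ.repr u n) * φ.repr v n

/-- The `n`-th singular value (min-max characterization) of the embedding of
the interpolation space `[H₀, H₁]_{θ₂}` into `[H₀, H₁]_{θ₁}`, defined
spectrally via the eigenpairs `(sₙ, φₙ)` of `(E*E)^{1/2}` for the embedding
`E : H₁ → H₀`. -/
def interpEmbSingVal (φ : HilbertBasis ℕ ℂ H) (s : ℕ → ℝ) (θ₁ θ₂ : ℝ) (n : ℕ) : ℝ :=
  ⨅ F : {F : Submodule ℂ H // Module.finrank ℂ F ≤ n},
    ⨆ u : {u : H // interpMem φ s θ₂ u ∧ interpNorm φ s θ₂ u = 1 ∧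
        ∀ v ∈ (F : Submodule ℂ H), interpInner φ s θ₂ v u = 0},
      interpNorm φ s θ₁ (u : H)

/-- If the embedding `H₁ ↪ H₀` is Hilbert–Schmidt (its singular values `sₙ`
are `ℓ²`-summable), then for `0 ≤ θ₁ < θ₂ ≤ 1` the embedding of the
interpolation space `[H₀, H₁]_{θ₂}` into `[H₀, H₁]_{θ₁}` belongs to the
Schatten class of order `2/(θ₂ − θ₁)`: its singular values are
`ℓ^{2/(θ₂-θ₁)}`-summable. -/
theorem stmt_13 (φ : HilbertBasis ℕ ℂ H) (s : ℕ → ℝ)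
    (hpos : ∀ n, 0 < s n) (hanti : Antitone s)
    (hHS : Summable fun n => s n ^ 2)
    (θ₁ θ₂ : ℝ) (h₁ : 0 ≤ θ₁) (h₁₂ : θ₁ < θ₂) (h₂ : θ₂ ≤ 1) :
    Summable fun n =>
      interpEmbSingVal φ s θ₁ θ₂ n ^ (2 / (θ₂ - θ₁)) := by
  classical
  have hd : (0:ℝ) < θ₂ - θ₁ := by linarith
  -- each inner sup is nonneg
  have hsup0 : ∀ n (F : {F : Submodule ℂ H // Module.finrank ℂ F ≤ n}),
      0 ≤ ⨆ u : {u : H // interpMem φ s θ₂ u ∧ interpNorm φ s θ₂ u = 1 ∧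
        ∀ v ∈ (F : Submodule ℂ H), interpInner φ s θ₂ v u = 0},
      interpNorm φ s θ₁ (u : H) := fun n F =>
    Real.iSup_nonneg fun u => Real.sqrt_nonneg _
  have hsv0 : ∀ n, 0 ≤ interpEmbSingVal φ s θ₁ θ₂ n := fun n =>
    have : Nonempty {F : Submodule ℂ H // Module.finrank ℂ F ≤ n} :=
      ⟨⟨⊥, by simp⟩⟩
    le_ciInf (hsup0 n)
  have key : ∀ n, interpEmbSingVal φ s θ₁ θ₂ n ≤ s n ^ (θ₂ - θ₁) := by
    intro n
    set F : Submodule ℂ H := Submodule.span ℂ (Set.range fun i : Fin n => φ i) with hFdef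
    have hFr : Module.finrank ℂ F ≤ n := by
      refine (finrank_span_le_card _).trans ?_
      rw [Set.toFinset_range]
      exact (Finset.card_image_le).trans (by simp)
    refine ciInf_le_of_le ⟨0, fun x ⟨i, hi⟩ => hi ▸ hsup0 n i⟩ ⟨F, hFr⟩ ?_
    refine Real.iSup_le ?_ (Real.rpow_nonneg (hpos n).le _)
    rintro ⟨u, hmem, hnorm, horth⟩
    -- coordinates below n vanish
    have hrep : ∀ k < n, φ.repr u k = 0 := by
      intro k hk
      have hkF : φ k ∈ F := Submodule.subset_span ⟨⟨k, hk⟩, rfl⟩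
      have h0 := horth (φ k) hkF
      rw [interpInner] at h0
      have heq : (∑' m, ((s m ^ (2 * (1 - θ₂)) : ℝ) : ℂ) *
          (starRingEnd ℂ) (φ.repr (φ k) m) * φ.repr u m)
          = ((s k ^ (2 * (1 - θ₂)) : ℝ) : ℂ) * φ.repr u k := by
        rw [tsum_eq_single k]
        · rw [φ.repr_self, lp.single_apply_self]
          simp
        · intro m hm
          rw [φ.repr_self, lp.single_apply_ne _ _ _ hm]
          simp
      rw [heq] at h0
      have hne : ((s k ^ (2 * (1 - θ₂)) : ℝ) : ℂ) ≠ 0 := by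
        exact_mod_cast (Real.rpow_pos_of_pos (hpos k) _).ne'
      exact (mul_eq_zero.mp h0).resolve_left hne
    -- termwise bound
    have hbound : ∀ m, s m ^ (2 * (1 - θ₁)) * ‖φ.repr u m‖ ^ 2 ≤
        s n ^ (2 * (θ₂ - θ₁)) * (s m ^ (2 * (1 - θ₂)) * ‖φ.repr u m‖ ^ 2) := by
      intro m
      rcases lt_or_ge m n with hm | hm
      · rw [hrep m hm]
        simpa using mul_nonneg (Real.rpow_nonneg (hpos n).le _)
          (mul_nonneg (Real.rpow_nonneg (hpos m).le _) (sq_nonneg _))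
      · have hsplit : s m ^ (2 * (1 - θ₁)) =
            s m ^ (2 * (θ₂ - θ₁)) * s m ^ (2 * (1 - θ₂)) := by
          rw [← Real.rpow_add (hpos m)]; ring_nf
        rw [hsplit, mul_assoc]
        refine mul_le_mul_of_nonneg_right ?_ (mul_nonneg (Real.rpow_nonneg (hpos m).le _) (sq_nonneg _))
        exact Real.rpow_le_rpow (hpos m).le (hanti hm) (by linarith)
    have hsum1 : Summable fun m => s m ^ (2 * (1 - θ₁)) * ‖φ.repr u m‖ ^ 2 := by
      refine Summable.of_nonneg_of_le (fun m => mul_nonneg (Real.rpow_nonneg (hpos m).le _) (sq_nonneg _)) hbound ?_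
      exact hmem.mul_left _
    have hts2 : (∑' m, s m ^ (2 * (1 - θ₂)) * ‖φ.repr u m‖ ^ 2) = 1 := by
      have := hnorm
      rw [interpNorm] at this
      exact (Real.sqrt_eq_one).mp this
    have hts : (∑' m, s m ^ (2 * (1 - θ₁)) * ‖φ.repr u m‖ ^ 2) ≤
        s n ^ (2 * (θ₂ - θ₁)) := by
      calc (∑' m, s m ^ (2 * (1 - θ₁)) * ‖φ.repr u m‖ ^ 2)
          ≤ ∑' m, s n ^ (2 * (θ₂ - θ₁)) * (s m ^ (2 * (1 - θ₂)) * ‖φ.repr u m‖ ^ 2) :=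
            Summable.tsum_le_tsum hbound hsum1 (hmem.mul_left _)
        _ = s n ^ (2 * (θ₂ - θ₁)) * ∑' m, s m ^ (2 * (1 - θ₂)) * ‖φ.repr u m‖ ^ 2 :=
            tsum_mul_left
        _ = s n ^ (2 * (θ₂ - θ₁)) := by rw [hts2, mul_one]
    show interpNorm φ s θ₁ u ≤ s n ^ (θ₂ - θ₁)
    rw [interpNorm]
    calc Real.sqrt (∑' m, s m ^ (2 * (1 - θ₁)) * ‖φ.repr u m‖ ^ 2)
        ≤ Real.sqrt (s n ^ (2 * (θ₂ - θ₁))) := Real.sqrt_le_sqrt hts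
      _ = s n ^ (θ₂ - θ₁) := by
          rw [show (2 : ℝ) * (θ₂ - θ₁) = (θ₂ - θ₁) * 2 by ring,
            Real.rpow_mul (hpos n).le, Real.rpow_two,
            Real.sqrt_sq (Real.rpow_nonneg (hpos n).le _)]
  -- comparison with s n ^ 2
  refine Summable.of_nonneg_of_le (fun n => Real.rpow_nonneg (hsv0 n) _) (fun n => ?_) hHS
  calc interpEmbSingVal φ s θ₁ θ₂ n ^ (2 / (θ₂ - θ₁))
      ≤ (s n ^ (θ₂ - θ₁)) ^ (2 / (θ₂ - θ₁)) :=
        Real.rpow_le_rpow (hsv0 n) (key n) (by positivity)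
    _ = s n ^ 2 := by
        rw [← Real.rpow_natCast (s n) 2, ← Real.rpow_mul (hpos n).le]
        congr 1
        field_simp
        norm_num
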